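/- Let ⟨X,d_X⟩ and ⟨Y,d_Y⟩ be metric spaces, let ⟨X*,d*_X,ι_X⟩ and ⟨Y*,d*_Y,ι_Y⟩ be their respective completions, and let f̂ : X* → Y* be a continuous function. Then there exists a metric space ⟨Z,d'⟩ of cardinality at most the cardinal sum |X| + |Y|, a dense isometry ι : ⟨Y,d_Y⟩ → ⟨Z,d'⟩, and a dense isometry ι' : ⟨Z,d'⟩ → ⟨Y*,d*_Y⟩ such that the range of f̂ ∘ ι_X is contained in the range of ι'. -/

import Mathlib

universe u

/-- given completions `⟨X*,ι_X⟩` of `X` and `⟨Y*,ι_Y⟩` of `Y` and a continuous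
`f̂ : X* → Y*`, there is a metric space `Z` of cardinality at most `|X| + |Y|`, a dense
isometry `ι : Y → Z` and a dense isometry `ι' : Z → Y*` with
`range (f̂ ∘ ι_X) ⊆ range ι'`. -/
theorem intermediate_code_for_extension
    {X Y Xs Ys : Type u} [MetricSpace X] [MetricSpace Y] [MetricSpace Xs] [MetricSpace Ys]
    [CompleteSpace Xs] [CompleteSpace Ys]
    (ιX : X → Xs) (hιX : Isometry ιX) (hιXd : DenseRange ιX)
    (ιY : Y → Ys) (hιY : Isometry ιY) (hιYd : DenseRange ιY)
    (fhat : Xs → Ys) (hfhat : Continuous fhat) :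
    ∃ (Z : Type u) (mZ : MetricSpace Z) (ι : Y → Z) (ι' : Z → Ys),
      Cardinal.mk Z ≤ Cardinal.mk X + Cardinal.mk Y ∧
      (letI := mZ
       Isometry ι ∧ DenseRange ι ∧ Isometry ι' ∧ DenseRange ι' ∧
       Set.range (fhat ∘ ιX) ⊆ Set.range ι') := by
  classical
  set S : Set Ys := Set.range (fhat ∘ ιX) ∪ Set.range ιY with hS
  refine ⟨S, inferInstance,
    fun y => ⟨ιY y, Or.inr ⟨y, rfl⟩⟩, Subtype.val, ?_, ?_, ?_, ?_, ?_, ?_⟩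
  · -- cardinality
    have hsurj : Function.Surjective
        (Sum.elim (fun x : X => (⟨fhat (ιX x), Or.inl ⟨x, rfl⟩⟩ : S))
                  (fun y : Y => (⟨ιY y, Or.inr ⟨y, rfl⟩⟩ : S))) := by
      rintro ⟨z, hz | hz⟩
      · obtain ⟨x, hx⟩ := hz
        exact ⟨Sum.inl x, Subtype.ext hx⟩
      · obtain ⟨y, hy⟩ := hz
        exact ⟨Sum.inr y, Subtype.ext hy⟩
    calc Cardinal.mk S ≤ Cardinal.mk (X ⊕ Y) := Cardinal.mk_le_of_surjective hsurj
      _ = Cardinal.mk X + Cardinal.mk Y := by simp [Cardinal.mk_sum]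
  · intro y₁ y₂
    simpa [Subtype.edist_eq] using hιY y₁ y₂
  · -- dense range of ι
    intro z
    rw [mem_closure_iff_seq_limit]
    obtain ⟨u, hu⟩ := mem_closure_iff_seq_limit.1 (hιYd (z : Ys))
    choose v hv using hu.1
    refine ⟨fun n => ⟨ιY (v n), Or.inr ⟨v n, rfl⟩⟩, fun n => ⟨v n, rfl⟩, ?_⟩
    rw [Topology.IsEmbedding.subtypeVal.tendsto_nhds_iff]
    simpa [hv, Function.comp_def] using hu.2
  · exact isometry_subtype_coe
  · -- dense range of ι'
    have : Set.range (ιY) ⊆ Set.range ((↑) : S → Ys) := by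
      rintro _ ⟨y, rfl⟩; exact ⟨⟨ιY y, Or.inr ⟨y, rfl⟩⟩, rfl⟩
    exact hιYd.mono this
  · rintro _ ⟨x, rfl⟩
    exact ⟨⟨fhat (ιX x), Or.inl ⟨x, rfl⟩⟩, rfl⟩
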